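/- Let α > 0, set ω² = (2^(−1−α) + 2^(−α/2))·α and c = ω² + 2^(−α/2)·α², and let B₄ = B(ω,c,c) be the 4×4 real matrix with rows (0,0,1,0), (0,0,0,1), (c,0,0,2ω), (0,c,−2ω,0), where ω = √(ω²) > 0. Then every complex eigenvalue of B₄ has nonzero real part, and at least one eigenvalue has strictly positive real part. Consequently, the relative equilibrium of four equal masses at the square central configuration under the α-homogeneous potential is spectrally unstable for every α > 0. -/

import Mathlib

open Polynomial

/-- The linearization matrix of the planar system `ẍ = 2ωJẋ + diag(c₁,c₂)x`. -/
def B (ω c₁ c₂ : ℝ) : Matrix (Fin 4) (Fin 4) ℝ :=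
  !![0, 0, 1, 0;
     0, 0, 0, 1;
     c₁, 0, 0, 2*ω;
     0, c₂, -(2*ω), 0]

/-- `ω² = (2^(−1−α) + 2^(−α/2))·α`, the squared angular speed of the square relative
equilibrium under the α-homogeneous potential. -/
noncomputable def ωsq2 (α : ℝ) : ℝ := ((2:ℝ) ^ (-1 - α) + (2:ℝ) ^ (-(α/2))) * α

/-- `c = ω² + 2^(−α/2)·α²`, the entry of the block `B₄ = B(ω,c,c)`. -/
noncomputable def csq (α : ℝ) : ℝ := ωsq2 α + (2:ℝ) ^ (-(α/2)) * α ^ 2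

lemma eval_charpoly4 (M : Matrix (Fin 4) (Fin 4) ℂ) (μ : ℂ) :
    M.charpoly.eval μ = (μ • (1 : Matrix (Fin 4) (Fin 4) ℂ) - M).det := by
  rw [Matrix.charpoly, ← Polynomial.coe_evalRingHom, RingHom.map_det]
  congr 1
  ext i j
  by_cases h : i = j
  · subst h
    simp [Matrix.charmatrix_apply_eq, Matrix.one_apply]
  · simp [Matrix.charmatrix_apply_ne _ _ _ h, Matrix.one_apply_ne h]

lemma eval_B_charpoly (ω c : ℝ) (μ : ℂ) :
    (((B ω c c).map (Complex.ofReal)).charpoly).eval μ =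
      μ ^ 4 + ((4 * ω ^ 2 - 2 * c : ℝ) : ℂ) * μ ^ 2 + ((c ^ 2 : ℝ) : ℂ) := by
  rw [eval_charpoly4, Matrix.det_succ_row_zero]
  simp [B, Matrix.one_apply, Fin.sum_univ_succ, Matrix.det_fin_three,
    Fin.succAbove]
  ring

/-- The block of the linearization at the square relative equilibrium under the
α-homogeneous potential corresponding to the double Hessian eigenvalue `2^(−α/2)α²`
is spectrally unstable for all `α > 0`. -/
theorem B₄_square_alpha_unstable (α : ℝ) (hα : 0 < α) :
    (∀ μ : ℂ,
      (((B (Real.sqrt (ωsq2 α)) (csq α) (csq α)).map (Complex.ofReal)).charpoly).IsRoot μ →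
        μ.re ≠ 0) ∧
    (∃ μ : ℂ,
      (((B (Real.sqrt (ωsq2 α)) (csq α) (csq α)).map (Complex.ofReal)).charpoly).IsRoot μ ∧
        0 < μ.re) := by
  set w := ωsq2 α with hwdef
  set c := csq α with hcdef
  have hw : 0 < w := by
    rw [hwdef, ωsq2]; positivity
  have hωsq : Real.sqrt w ^ 2 = w := Real.sq_sqrt hw.le
  have hc : w < c := by
    rw [hcdef, csq, ← hwdef]
    have : 0 < (2:ℝ) ^ (-(α/2)) * α ^ 2 := by positivity
    linarith
  have key : ∀ μ : ℂ,
      (((B (Real.sqrt w) c c).map (Complex.ofReal)).charpoly).IsRoot μ → μ.re ≠ 0 := by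
    intro μ hroot hre
    have heval := hroot
    rw [IsRoot, eval_B_charpoly] at heval
    have hμ : μ = (μ.im : ℂ) * Complex.I := by
      apply Complex.ext <;> simp [hre]
    have h2 : μ ^ 2 = ((-(μ.im ^ 2) : ℝ) : ℂ) := by
      nth_rewrite 1 [hμ]
      rw [mul_pow, Complex.I_sq]; push_cast; ring
    rw [show μ ^ 4 = (μ ^ 2) ^ 2 by ring, h2] at heval
    have hr : (-(μ.im ^ 2)) ^ 2 + (4 * Real.sqrt w ^ 2 - 2 * c) * (-(μ.im ^ 2)) + c ^ 2 = 0 := by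
      exact_mod_cast heval
    rw [hωsq] at hr
    nlinarith [sq_nonneg (2 * (-(μ.im ^ 2)) + (4 * w - 2 * c)), sq_nonneg (μ.im ^ 2)]
  refine ⟨key, ?_⟩
  have hdeg : (0:WithBot ℕ) < (((B (Real.sqrt w) c c).map (Complex.ofReal)).charpoly).degree := by
    rw [Matrix.charpoly_degree_eq_dim]
    norm_num [Fintype.card_fin]
  obtain ⟨z, hz⟩ := Complex.exists_root hdeg
  rcases lt_trichotomy z.re 0 with h | h | h
  · refine ⟨-z, ?_, by simpa using h⟩
    rw [IsRoot, eval_B_charpoly]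
    rw [IsRoot, eval_B_charpoly] at hz
    convert hz using 2 <;> ring
  · exact absurd h (key z hz)
  · exact ⟨z, hz, h⟩
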